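/- For every even integer n ≥ 4 with n ≡ 4 (mod 6), the helm graph H_{1,n} satisfies ζ(H_{1,n}) = (4n − 1)(n − 1)/3; this equals 3·((2n+1)/3)² − 3n, the value obtained from the balanced 3-partition of the 2n + 1 vertices into three color classes of size (2n+1)/3 each, minus the 3n edges of H_{1,n}. -/

import Mathlib

open SimpleGraph

/-- A proper vertex colouring of `G` using exactly `χ(G)` colours. -/
def IsChromaticColoring {V : Type*} (G : SimpleGraph V) (c : V → ℕ) : Prop :=
  (∀ u v, G.Adj u v → c u ≠ c v) ∧ ((Set.range c).ncard : ℕ∞) = G.chromaticNumber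

/-- The set of chromatic completion edges for a colouring `c`: unordered pairs of
distinct non-adjacent vertices with different colours. -/
def completionEdges {V : Type*} (G : SimpleGraph V) (c : V → ℕ) : Set (Sym2 V) :=
  {e | ∃ u v, e = s(u, v) ∧ u ≠ v ∧ ¬ G.Adj u v ∧ c u ≠ c v}

/-- The chromatic completion number `ζ(G)`. -/
noncomputable def zeta {V : Type*} (G : SimpleGraph V) : ℕ :=
  sSup {m | ∃ c : V → ℕ, IsChromaticColoring G c ∧ m = (completionEdges G c).ncard}

/-- The wheel graph `W_{1,n}`: the cycle `C_n` (on the `some` vertices) joined to a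
central hub vertex `none` adjacent to every rim vertex. -/
def wheelGraph (n : ℕ) : SimpleGraph (Option (Fin n)) where
  Adj u v := match u, v with
    | none, none => False
    | none, some _ => True
    | some _, none => True
    | some i, some j => (cycleGraph n).Adj i j
  symm := by
    constructor
    intro u v h
    cases u <;> cases v <;> simp_all
    exact ((cycleGraph n).adj_symm h)
  loopless := by
    constructor
    intro u h
    cases u with
    | none => exact h
    | some i => exact (cycleGraph n).ne_of_adj h rfl

/-- The helm graph `H_{1,n}`: the wheel `W_{1,n}` (on the `inl` vertices) with a pendant
vertex `inr i` attached to the rim vertex `inl (some i)` for each `i`. -/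
def helmGraph (n : ℕ) : SimpleGraph (Option (Fin n) ⊕ Fin n) where
  Adj u v := match u, v with
    | Sum.inl a, Sum.inl b => (wheelGraph n).Adj a b
    | Sum.inl a, Sum.inr j => a = some j
    | Sum.inr i, Sum.inl b => b = some i
    | Sum.inr _, Sum.inr _ => False
  symm := by
    constructor
    intro u v h
    cases u <;> cases v <;> simp_all
    exact (wheelGraph n).adj_symm h
  loopless := by
    constructor
    intro u h
    cases u with
    | inl a => exact (wheelGraph n).ne_of_adj h rfl
    | inr i => exact h

section Aux

variable {n : ℕ}

instance wheelDec (n : ℕ) : DecidableRel (wheelGraph n).Adj := fun u v =>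
  match u, v with
  | none, none => inferInstanceAs (Decidable False)
  | none, some _ => inferInstanceAs (Decidable True)
  | some _, none => inferInstanceAs (Decidable True)
  | some i, some j => inferInstanceAs (Decidable ((cycleGraph n).Adj i j))

instance helmDec (n : ℕ) : DecidableRel (helmGraph n).Adj := fun u v =>
  match u, v with
  | Sum.inl a, Sum.inl b => inferInstanceAs (Decidable ((wheelGraph n).Adj a b))
  | Sum.inl a, Sum.inr j => inferInstanceAs (Decidable (a = some j))
  | Sum.inr i, Sum.inl b => inferInstanceAs (Decidable (b = some i))
  | Sum.inr _, Sum.inr _ => inferInstanceAs (Decidable False)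

@[simp] lemma helm_adj_inl_inl {a b : Option (Fin n)} :
    (helmGraph n).Adj (Sum.inl a) (Sum.inl b) ↔ (wheelGraph n).Adj a b := Iff.rfl
@[simp] lemma helm_adj_inl_inr {a : Option (Fin n)} {j : Fin n} :
    (helmGraph n).Adj (Sum.inl a) (Sum.inr j) ↔ a = some j := Iff.rfl
@[simp] lemma helm_adj_inr_inl {a : Option (Fin n)} {j : Fin n} :
    (helmGraph n).Adj (Sum.inr j) (Sum.inl a) ↔ a = some j := Iff.rfl
@[simp] lemma helm_adj_inr_inr {i j : Fin n} :
    ¬ (helmGraph n).Adj (Sum.inr i) (Sum.inr j) := fun h => h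
@[simp] lemma wheel_adj_none_some {i : Fin n} :
    (wheelGraph n).Adj none (some i) := trivial
@[simp] lemma wheel_adj_some_none {i : Fin n} :
    (wheelGraph n).Adj (some i) none := trivial
@[simp] lemma wheel_adj_none_none : ¬ (wheelGraph n).Adj (none : Option (Fin n)) none := fun h => h
@[simp] lemma wheel_adj_some_some {i j : Fin n} :
    (wheelGraph n).Adj (some i) (some j) ↔ (cycleGraph n).Adj i j := Iff.rfl

end Aux
section Aux2

variable {n : ℕ}

/-- The balanced chromatic colouring of the helm graph. -/
def helmCol (n : ℕ) : Option (Fin n) ⊕ Fin n → ℕ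
  | Sum.inl none => 2
  | Sum.inl (some i) => i.val % 2
  | Sum.inr i => if i.val < (n+2)/3 then 1 - i.val % 2 else 2

lemma cycle_adj_parity (hn : 4 ≤ n) (he : n % 2 = 0) {i j : Fin n}
    (h : (cycleGraph n).Adj i j) : i.val % 2 ≠ j.val % 2 := by
  obtain ⟨m, rfl⟩ : ∃ m, n = m + 2 := ⟨n - 2, by omega⟩
  rw [cycleGraph_adj] at h
  have key : ∀ a b : Fin (m + 2), a - b = 1 → a.val % 2 ≠ b.val % 2 := by
    intro a b hab
    have hb : a = b + 1 := by
      rw [sub_eq_iff_eq_add] at hab; rw [hab]; exact add_comm _ _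
    subst hb
    rcases eq_or_ne b (Fin.last (m+1)) with hb | hb
    · rw [Fin.val_add_one, if_pos hb, hb]
      simp only [Fin.val_last]
      omega
    · rw [Fin.val_add_one, if_neg hb]
      omega
  rcases h with h | h
  · exact key i j h
  · exact (key j i h).symm

lemma helmCol_lt_three (v : Option (Fin n) ⊕ Fin n) : helmCol n v < 3 := by
  rcases v with (_ | i) | i <;> simp only [helmCol] <;> first | omega | (split <;> omega)

lemma helmCol_proper (hn : 4 ≤ n) (he : n % 2 = 0) :
    ∀ u v, (helmGraph n).Adj u v → helmCol n u ≠ helmCol n v := by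
  rintro ((_ | i) | i) ((_ | j) | j) h <;>
    simp only [helm_adj_inl_inl, helm_adj_inl_inr, helm_adj_inr_inl, helmCol] at h ⊢
  · exact False.elim h
  · omega
  · cases h
  · omega
  · exact cycle_adj_parity hn he h
  · obtain rfl := Option.some.inj h
    split <;> omega
  · cases h
  · obtain rfl := Option.some.inj h
    split <;> omega
  · exact False.elim h

lemma cycle_adj_zero_one (m : ℕ) : (cycleGraph (m+4)).Adj 0 1 := by
  rw [cycleGraph_adj']
  right
  simp

lemma helm_chromaticNumber (hn : 4 ≤ n) (he : n % 2 = 0) :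
    (helmGraph n).chromaticNumber = 3 := by
  have hcol : (helmGraph n).Colorable 3 :=
    ⟨SimpleGraph.Coloring.mk (fun v => ⟨helmCol n v, helmCol_lt_three v⟩)
      (fun hadj => by simpa [Fin.ext_iff] using helmCol_proper hn he _ _ hadj)⟩
  have hclique : ¬ (helmGraph n).CliqueFree 3 := by
    obtain ⟨m, rfl⟩ : ∃ m, n = m + 4 := ⟨n - 4, by omega⟩
    intro hcf
    have h01 : (0 : Fin (m+4)) ≠ 1 := by
      intro h
      have := congrArg Fin.val h
      simp at this
    apply hcf {Sum.inl none, Sum.inl (some 0), Sum.inl (some 1)}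
    constructor
    · intro u hu v hv huv
      simp only [Finset.coe_insert, Set.mem_insert_iff, Finset.coe_singleton,
        Set.mem_singleton_iff] at hu hv
      rcases hu with rfl | rfl | rfl <;> rcases hv with rfl | rfl | rfl <;>
        first
        | exact absurd rfl huv
        | simp [cycle_adj_zero_one m, ((cycleGraph (m+4)).adj_symm (cycle_adj_zero_one m))]
    · rw [Finset.card_insert_of_notMem (by simp),
        Finset.card_insert_of_notMem (by simpa using h01)]
      simp
  refine le_antisymm (by exact_mod_cast hcol.chromaticNumber_le) ?_
  by_contra hlt
  push_neg at hlt
  exact hclique (cliqueFree_of_chromaticNumber_lt (by exact_mod_cast hlt))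

end Aux2
section Aux3

variable {V : Type*} [Fintype V] [DecidableEq V]

/-- The graph whose edges are pairs of differently-coloured vertices. -/
def diffGraph (c : V → ℕ) : SimpleGraph V where
  Adj u v := c u ≠ c v
  symm := ⟨fun _ _ h => h.symm⟩
  loopless := ⟨fun _ h => h rfl⟩

instance (c : V → ℕ) : DecidableRel (diffGraph c).Adj :=
  fun u v => inferInstanceAs (Decidable (c u ≠ c v))

lemma completionEdges_eq (G : SimpleGraph V) (c : V → ℕ) :
    completionEdges G c = (diffGraph c \ G).edgeSet := by
  ext e
  induction e with
  | _ u v =>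
    simp only [completionEdges, Set.mem_setOf_eq, SimpleGraph.mem_edgeSet, SimpleGraph.sdiff_adj]
    constructor
    · rintro ⟨a, b, hab, hne, hnadj, hc⟩
      rw [Sym2.eq_iff] at hab
      rcases hab with ⟨rfl, rfl⟩ | ⟨rfl, rfl⟩
      · exact ⟨hc, hnadj⟩
      · exact ⟨hc.symm, fun h => hnadj h.symm⟩
    · rintro ⟨hc, hnadj⟩
      exact ⟨u, v, rfl, fun h => hc (by rw [h]), hnadj, hc⟩

lemma completion_card (G : SimpleGraph V) [DecidableRel G.Adj] (c : V → ℕ)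
    (hp : ∀ u v, G.Adj u v → c u ≠ c v) :
    (completionEdges G c).ncard + G.edgeFinset.card = (diffGraph c).edgeFinset.card := by
  have hle : G ≤ diffGraph c := by intro u v huv; exact hp u v huv
  have hsub : G.edgeFinset ⊆ (diffGraph c).edgeFinset :=
    SimpleGraph.edgeFinset_subset_edgeFinset.mpr hle
  rw [completionEdges_eq, ← SimpleGraph.coe_edgeFinset, Set.ncard_coe_finset,
    SimpleGraph.edgeFinset_sdiff, Finset.card_sdiff_of_subset hsub]
  exact Nat.sub_add_cancel (Finset.card_le_card hsub)

lemma diff_two_mul (c : V → ℕ) :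
    2 * (diffGraph c).edgeFinset.card
      + ∑ k ∈ Finset.univ.image c, (Finset.univ.filter (fun v => c v = k)).card ^ 2
      = (Fintype.card V) ^ 2 := by
  rw [SimpleGraph.two_mul_card_edgeFinset]
  have h1 : (Finset.univ.filter (fun p : V × V => c p.1 = c p.2)).card
      = ∑ k ∈ Finset.univ.image c, (Finset.univ.filter (fun v => c v = k)).card ^ 2 := by
    rw [Finset.card_eq_sum_card_fiberwise
      (f := fun p : V × V => c p.1) (t := Finset.univ.image c)
      (fun p _ => Finset.mem_image_of_mem c (Finset.mem_univ p.1))]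
    refine Finset.sum_congr rfl fun k _ => ?_
    have : (Finset.univ.filter (fun p : V × V => c p.1 = c p.2)).filter
        (fun p => c p.1 = k)
        = (Finset.univ.filter (fun v => c v = k)) ×ˢ (Finset.univ.filter (fun v => c v = k)) := by
      ext ⟨u, v⟩
      simp only [Finset.mem_filter, Finset.mem_product, Finset.mem_univ, true_and]
      constructor
      · rintro ⟨h1, h2⟩; exact ⟨h2, h2 ▸ h1.symm⟩
      · rintro ⟨h1, h2⟩; exact ⟨h1.trans h2.symm, h1⟩
    rw [this, Finset.card_product, sq]
  have h2 := Finset.card_filter_add_card_filter_not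
    (s := (Finset.univ : Finset (V × V))) (p := fun p : V × V => c p.1 = c p.2)
  have h3 : (Finset.univ : Finset (V × V)).card = (Fintype.card V) ^ 2 := by
    simp [Finset.card_univ, sq]
  have h4 : (Finset.univ.filter (fun ((x, y) : V × V) => (diffGraph c).Adj x y))
      = (Finset.univ.filter (fun a : V × V => ¬ c a.1 = c a.2)) := by
    apply Finset.filter_congr
    intro ⟨u, v⟩ _
    simp [diffGraph]
  rw [h4]
  omega

lemma sum_fiber_card (c : V → ℕ) :
    ∑ k ∈ Finset.univ.image c, (Finset.univ.filter (fun v => c v = k)).card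
      = Fintype.card V := by
  rw [← Finset.card_univ,
    Finset.card_eq_sum_card_fiberwise (f := c) (t := Finset.univ.image c)
      (fun v _ => Finset.mem_image_of_mem c (Finset.mem_univ v))]

end Aux3
section Aux4

variable {n : ℕ}

lemma count_even (N : ℕ) : ((Finset.range N).filter (fun i => i % 2 = 0)).card = (N+1)/2 := by
  induction N with
  | zero => simp
  | succ k ih =>
    rw [Finset.range_add_one, Finset.filter_insert]
    split
    · rw [Finset.card_insert_of_notMem (by simp)]; omega
    · omega

lemma count_odd (N : ℕ) : ((Finset.range N).filter (fun i => i % 2 = 1)).card = N/2 := by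
  induction N with
  | zero => simp
  | succ k ih =>
    rw [Finset.range_add_one, Finset.filter_insert]
    split
    · rw [Finset.card_insert_of_notMem (by simp)]; omega
    · omega

lemma count_restrict (p : ℕ → Prop) [DecidablePred p] {t N : ℕ} (ht : t ≤ N) :
    (Finset.range N).filter (fun i => i < t ∧ p i) = (Finset.range t).filter p := by
  ext i
  simp only [Finset.mem_filter, Finset.mem_range]
  exact ⟨fun h => ⟨h.2.1, h.2.2⟩, fun h => ⟨lt_of_lt_of_le h.1 ht, h.1, h.2⟩⟩

lemma count_ge {t N : ℕ} (ht : t ≤ N) :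
    ((Finset.range N).filter (fun i => ¬ i < t)).card = N - t := by
  have : (Finset.range N).filter (fun i => ¬ i < t) = Finset.Ico t N := by
    ext i
    simp only [Finset.mem_filter, Finset.mem_range, Finset.mem_Ico]
    omega
  rw [this, Nat.card_Ico]

lemma card_filter_fin (p : ℕ → Prop) [DecidablePred p] :
    ((Finset.univ : Finset (Fin n)).filter (fun i => p i.val)).card
      = ((Finset.range n).filter p).card := by
  rw [Finset.card_filter, Finset.card_filter,
    Fin.sum_univ_eq_sum_range (fun k => if p k then 1 else 0)]

lemma fiber_split (k : ℕ) :
    ((Finset.univ : Finset (Option (Fin n) ⊕ Fin n)).filter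
        (fun v => helmCol n v = k)).card
      = (if 2 = k then 1 else 0)
        + ((Finset.range n).filter (fun i => i % 2 = k)).card
        + ((Finset.range n).filter
            (fun i => (if i < (n+2)/3 then 1 - i % 2 else 2) = k)).card := by
  rw [Finset.card_filter, Fintype.sum_sum_type, Fintype.sum_option]
  have h1 : ∑ i : Fin n, (if helmCol n (Sum.inl (some i)) = k then 1 else 0)
      = ((Finset.range n).filter (fun i => i % 2 = k)).card := by
    rw [← card_filter_fin (fun i => i % 2 = k), Finset.card_filter]
    rfl
  have h2 : ∑ i : Fin n, (if helmCol n (Sum.inr i) = k then 1 else 0)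
      = ((Finset.range n).filter
          (fun i => (if i < (n+2)/3 then 1 - i % 2 else 2) = k)).card := by
    rw [← card_filter_fin (fun i => (if i < (n+2)/3 then 1 - i % 2 else 2) = k),
      Finset.card_filter]
    rfl
  rw [h1, h2]
  rfl

lemma helmCol_fiber (hn : 4 ≤ n) (hmod : n % 6 = 4) {k : ℕ} (hk : k < 3) :
    ((Finset.univ : Finset (Option (Fin n) ⊕ Fin n)).filter
        (fun v => helmCol n v = k)).card = (2*n+1)/3 := by
  have ht : (n+2)/3 ≤ n := by omega
  interval_cases k
  · rw [fiber_split 0, if_neg (by omega), count_even]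
    have : (Finset.range n).filter (fun i => (if i < (n+2)/3 then 1 - i % 2 else 2) = 0)
        = (Finset.range ((n+2)/3)).filter (fun i => i % 2 = 1) := by
      rw [← count_restrict (fun i => i % 2 = 1) ht]
      apply Finset.filter_congr
      intro i _
      constructor
      · intro h; split at h <;> omega
      · intro h; rw [if_pos h.1]; omega
    rw [this, count_odd]
    omega
  · rw [fiber_split 1, if_neg (by omega), count_odd]
    have : (Finset.range n).filter (fun i => (if i < (n+2)/3 then 1 - i % 2 else 2) = 1)
        = (Finset.range ((n+2)/3)).filter (fun i => i % 2 = 0) := by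
      rw [← count_restrict (fun i => i % 2 = 0) ht]
      apply Finset.filter_congr
      intro i _
      constructor
      · intro h; split at h <;> omega
      · intro h; rw [if_pos h.1]; omega
    rw [this, count_even]
    omega
  · rw [fiber_split 2, if_pos rfl]
    have h2 : (Finset.range n).filter (fun i => i % 2 = 2) = ∅ := by
      apply Finset.filter_false_of_mem; intro i _; omega
    have : (Finset.range n).filter (fun i => (if i < (n+2)/3 then 1 - i % 2 else 2) = 2)
        = (Finset.range n).filter (fun i => ¬ i < (n+2)/3) := by
      apply Finset.filter_congr
      intro i _
      constructor
      · intro h; intro hlt; rw [if_pos hlt] at h; omega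
      · intro h; rw [if_neg h]
    rw [h2, this, count_ge ht, Finset.card_empty]
    omega

lemma helmCol_image (hn : 4 ≤ n) :
    Finset.univ.image (helmCol n) = ({0, 1, 2} : Finset ℕ) := by
  obtain ⟨m, rfl⟩ : ∃ m, n = m + 4 := ⟨n - 4, by omega⟩
  apply Finset.Subset.antisymm
  · intro k hk
    simp only [Finset.mem_image, Finset.mem_univ, true_and] at hk
    obtain ⟨v, rfl⟩ := hk
    have := helmCol_lt_three v
    simp only [Finset.mem_insert, Finset.mem_singleton]
    omega
  · intro k hk
    simp only [Finset.mem_insert, Finset.mem_singleton] at hk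
    simp only [Finset.mem_image, Finset.mem_univ, true_and]
    rcases hk with rfl | rfl | rfl
    · exact ⟨Sum.inl (some 0), by simp [helmCol]⟩
    · exact ⟨Sum.inl (some 1), by simp [helmCol]⟩
    · exact ⟨Sum.inl none, rfl⟩

lemma helmCol_range_ncard (hn : 4 ≤ n) : (Set.range (helmCol n)).ncard = 3 := by
  have h : Set.range (helmCol n) = ↑(Finset.univ.image (helmCol n)) := by
    ext x; simp
  rw [h, Set.ncard_coe_finset, helmCol_image hn]
  rfl

lemma helm_edge_card (hn : 4 ≤ n) : (helmGraph n).edgeFinset.card * 2 = 6 * n := by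
  obtain ⟨m, rfl⟩ : ∃ m, n = m + 4 := ⟨n - 4, by omega⟩
  have h := (helmGraph (m+4)).two_mul_card_edgeFinset
  have hdeg : ∀ i : Fin (m+4),
      (∑ j : Fin (m+4), if (cycleGraph (m+4)).Adj i j then 1 else 0) = 2 := by
    intro i
    have h2 : (cycleGraph (m+4)).degree i = 2 := cycleGraph_degree_three_le (n := m+1) (v := i)
    rw [← h2, SimpleGraph.degree, ← Finset.card_filter]
    congr 1
    ext j
    simp [SimpleGraph.mem_neighborFinset]
  have hrhs : (Finset.univ.filter
      (fun ((x, y) : (Option (Fin (m+4)) ⊕ Fin (m+4)) × _) => (helmGraph (m+4)).Adj x y)).card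
      = 6 * (m+4) := by
    rw [Finset.card_filter, ← Finset.univ_product_univ, Finset.sum_product,
      Fintype.sum_sum_type, Fintype.sum_option]
    have hhub : ∑ y : Option (Fin (m+4)) ⊕ Fin (m+4),
        (if (helmGraph (m+4)).Adj (Sum.inl none) y then 1 else 0) = m + 4 := by
      rw [Fintype.sum_sum_type, Fintype.sum_option]
      simp [helmGraph, wheelGraph]
    have hrim : ∀ i : Fin (m+4), ∑ y : Option (Fin (m+4)) ⊕ Fin (m+4),
        (if (helmGraph (m+4)).Adj (Sum.inl (some i)) y then 1 else 0) = 4 := by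
      intro i
      rw [Fintype.sum_sum_type, Fintype.sum_option]
      have e1 : ∑ j : Fin (m+4),
          (if (helmGraph (m+4)).Adj (Sum.inl (some i)) (Sum.inl (some j)) then 1 else 0) = 2 := by
        rw [← hdeg i]
        rfl
      have e2 : (∑ j : Fin (m+4),
          if (helmGraph (m+4)).Adj (Sum.inl (some i)) (Sum.inr j) then 1 else 0) = 1 := by
        simp only [helm_adj_inl_inr, Option.some.injEq]
        simp
      rw [e1, e2]
      norm_num
    have hpend : ∀ i : Fin (m+4), ∑ y : Option (Fin (m+4)) ⊕ Fin (m+4),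
        (if (helmGraph (m+4)).Adj (Sum.inr i) y then 1 else 0) = 1 := by
      intro i
      rw [Fintype.sum_sum_type, Fintype.sum_option]
      have e1 : (∑ j : Fin (m+4),
          if (helmGraph (m+4)).Adj (Sum.inr i) (Sum.inl (some j)) then 1 else 0) = 1 := by
        simp only [helm_adj_inr_inl, Option.some.injEq]
        simp
      have e2 : (∑ j : Fin (m+4),
          if (helmGraph (m+4)).Adj (Sum.inr i) (Sum.inr j) then 1 else 0) = 0 := by
        simp
      rw [e1, e2]
      simp
    rw [hhub]
    rw [Finset.sum_congr rfl (fun i _ => hrim i), Finset.sum_congr rfl (fun i _ => hpend i)]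
    simp [Finset.card_univ, mul_comm]
    ring
  rw [hrhs] at h
  omega
end Aux4

/-- For even `n ≥ 4` with `n ≡ 4 (mod 6)`, `ζ(H_{1,n}) = (4n-1)(n-1)/3`, which equals
`3((2n+1)/3)² - 3n`, the value from the balanced 3-partition of the `2n+1` vertices. -/
theorem zeta_helm_four_mod_six (n : ℕ) (hn : 4 ≤ n) (hmod : n % 6 = 4) :
    zeta (helmGraph n) = (4 * n - 1) * (n - 1) / 3 ∧
    zeta (helmGraph n) = 3 * ((2 * n + 1) / 3) ^ 2 - 3 * n := by
  have he : n % 2 = 0 := by omega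
  set K : ℕ := (2 * n + 1) / 3 with hK
  have hK3 : 3 * K = 2 * n + 1 := by omega
  have hχ := helm_chromaticNumber hn he
  have hV : Fintype.card (Option (Fin n) ⊕ Fin n) = 2 * n + 1 := by
    simp only [Fintype.card_sum, Fintype.card_option, Fintype.card_fin]
    omega
  have hE : (helmGraph n).edgeFinset.card = 3 * n := by
    have := helm_edge_card hn
    omega
  have h9 : (2 * n + 1) ^ 2 = 9 * K ^ 2 := by
    calc (2 * n + 1) ^ 2 = (3 * K) ^ 2 := by rw [hK3]
    _ = 9 * K ^ 2 := by ring
  have hnn : n ≤ n ^ 2 := Nat.le_self_pow (by norm_num) n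
  -- the balanced colouring achieves the value
  have hmem : (3 * K ^ 2 - 3 * n) ∈
      {m | ∃ c, IsChromaticColoring (helmGraph n) c ∧ m = (completionEdges (helmGraph n) c).ncard} := by
    refine ⟨helmCol n, ⟨helmCol_proper hn he, ?_⟩, ?_⟩
    · rw [hχ, helmCol_range_ncard hn]
      rfl
    · have hcc := completion_card (helmGraph n) (helmCol n) (helmCol_proper hn he)
      have hd := diff_two_mul (helmCol n)
      rw [helmCol_image hn, hV] at hd
      rw [show ({0, 1, 2} : Finset ℕ) = insert 0 (insert 1 {2}) from rfl,
        Finset.sum_insert (by norm_num), Finset.sum_insert (by norm_num),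
        Finset.sum_singleton, helmCol_fiber hn hmod (by norm_num),
        helmCol_fiber hn hmod (by norm_num), helmCol_fiber hn hmod (by norm_num)] at hd
      rw [← hK] at hd
      rw [hE] at hcc
      omega
  have hub : ∀ m ∈ {m | ∃ c, IsChromaticColoring (helmGraph n) c ∧
      m = (completionEdges (helmGraph n) c).ncard}, m ≤ 3 * K ^ 2 - 3 * n := by
    rintro m ⟨c, ⟨hp, hr⟩, rfl⟩
    rw [hχ] at hr
    have hr3 : (Set.range c).ncard = 3 := by exact_mod_cast hr
    have himg : (Finset.univ.image c).card = 3 := by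
      have hco : ↑(Finset.univ.image c) = Set.range c := by
        ext x; simp
      rw [← Set.ncard_coe_finset, hco, hr3]
    obtain ⟨x, y, z, hxy, hxz, hyz, himg3⟩ := Finset.card_eq_three.mp himg
    have hcc := completion_card (helmGraph n) c hp
    have hd := diff_two_mul c
    rw [himg3, hV] at hd
    rw [Finset.sum_insert (by simp [hxy, hxz]), Finset.sum_insert (by simp [hyz]),
      Finset.sum_singleton] at hd
    have hsum := sum_fiber_card c
    rw [himg3, hV] at hsum
    rw [Finset.sum_insert (by simp [hxy, hxz]), Finset.sum_insert (by simp [hyz]),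
      Finset.sum_singleton] at hsum
    set ax := (Finset.univ.filter (fun v => c v = x)).card
    set ay := (Finset.univ.filter (fun v => c v = y)).card
    set az := (Finset.univ.filter (fun v => c v = z)).card
    have hq : (ax + ay + az) ^ 2 ≤ 3 * (ax ^ 2 + ay ^ 2 + az ^ 2) := by
      zify
      nlinarith [sq_nonneg ((ax : ℤ) - ay), sq_nonneg ((ay : ℤ) - az), sq_nonneg ((ax : ℤ) - az)]
    have hs2 : ax + ay + az = 2 * n + 1 := by omega
    rw [hs2, h9] at hq
    rw [hE] at hcc
    omega
  have hzeta : zeta (helmGraph n) = 3 * K ^ 2 - 3 * n := by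
    unfold zeta
    exact le_antisymm (csSup_le ⟨_, hmem⟩ hub) (le_csSup ⟨_, hub⟩ hmem)
  refine ⟨?_, hzeta⟩
  rw [hzeta]
  obtain ⟨a, rfl⟩ : ∃ a, n = a + 1 := ⟨n - 1, by omega⟩
  rw [show 4 * (a + 1) - 1 = 4 * a + 3 from by omega, show a + 1 - 1 = a from by omega]
  have h1 : (4 * a + 3) * a = 4 * a ^ 2 + 3 * a := by ring
  have h2 : (2 * (a + 1) + 1) ^ 2 = 4 * a ^ 2 + 12 * a + 9 := by ring
  omega
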